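/- If positions i < j of π satisfy π(i) < π(j) (a non-inversion), then in S(π) the letter π(i) appears before the letter π(j); i.e., stack-sort never creates new inversions among values that were in increasing order of position and value. -/

import Mathlib

/-- Pop from the stack (top first) all letters smaller than `x`;
returns (popped output, remaining stack). -/
def stackPop (x : ℕ) : List ℕ → List ℕ × List ℕ
  | [] => ([], [])
  | t :: ts =>
    if t < x then
      let p := stackPop x ts
      (t :: p.1, p.2)
    else ([], t :: ts)

/-- Run the stack-sorting procedure with the given stack and input;
at the end the (increasing) stack is flushed to the output. -/
def stackRun : List ℕ → List ℕ → List ℕ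
  | stack, [] => stack
  | stack, x :: xs =>
    let p := stackPop x stack
    p.1 ++ stackRun (x :: p.2) xs

/-- The stack-sort operator: one pass of a permutation (word) through a stack. -/
def S (w : List ℕ) : List ℕ := stackRun [] w

/-- `w` is (the one-line notation of) a permutation of `{1, …, n}`. -/
def IsPermOf (w : List ℕ) (n : ℕ) : Prop := w.Perm (List.range' 1 n)

/-- The identity permutation `1 2 ⋯ n` in one-line notation. -/
def idPerm (n : ℕ) : List ℕ := List.range' 1 n

lemma stackPop_eq (x : ℕ) (s : List ℕ) :
    stackPop x s = (s.takeWhile (fun t => t < x), s.dropWhile (fun t => t < x)) := by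
  induction s with
  | nil => rfl
  | cons t ts ih =>
    by_cases h : t < x <;> simp [stackPop, List.takeWhile, List.dropWhile, h, ih]

lemma stackRun_cons (s : List ℕ) (x : ℕ) (xs : List ℕ) :
    stackRun s (x :: xs) =
      s.takeWhile (fun t => t < x) ++ stackRun (x :: s.dropWhile (fun t => t < x)) xs := by
  simp [stackRun, stackPop_eq]

lemma stackRun_perm (xs : List ℕ) : ∀ s : List ℕ, (stackRun s xs).Perm (s ++ xs) := by
  induction xs with
  | nil => intro s; simp [stackRun]
  | cons x xs ih =>
    intro s
    rw [stackRun_cons]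
    refine (List.Perm.append_left _ (ih _)).trans ?_
    have h1 : s.takeWhile (fun t => t < x) ++ ((x :: s.dropWhile (fun t => t < x)) ++ xs)
        = s.takeWhile (fun t => t < x) ++ x :: (s.dropWhile (fun t => t < x) ++ xs) := by simp
    rw [h1]
    refine List.perm_middle.trans ?_
    rw [← List.append_assoc, List.takeWhile_append_dropWhile]
    exact List.perm_middle.symm

lemma stack_sublist (xs : List ℕ) : ∀ s : List ℕ, s.Sublist (stackRun s xs) := by
  induction xs with
  | nil => intro s; simp [stackRun]
  | cons x xs ih =>
    intro s
    rw [stackRun_cons]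
    conv_lhs => rw [← List.takeWhile_append_dropWhile (p := fun t => t < x) (l := s)]
    exact List.Sublist.append (List.Sublist.refl _)
      ((List.sublist_cons_self x _).trans (ih _))

lemma le_of_mem_dropWhile {x : ℕ} {s : List ℕ} (hs : s.Pairwise (· ≤ ·))
    {y : ℕ} (hy : y ∈ s.dropWhile (fun t => t < x)) : x ≤ y := by
  induction s with
  | nil => simp [List.dropWhile] at hy
  | cons c s ih =>
    by_cases h : c < x
    · simp [List.dropWhile, h] at hy
      exact ih hs.of_cons hy
    · simp [List.dropWhile, h] at hy
      rcases hy with rfl | hy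
      · omega
      · have := (List.pairwise_cons.1 hs).1 y hy; omega

lemma mem_takeWhile_of_lt {x a : ℕ} {s : List ℕ} (hs : s.Pairwise (· ≤ ·))
    (ha : a ∈ s) (hax : a < x) : a ∈ s.takeWhile (fun t => t < x) := by
  rw [← List.takeWhile_append_dropWhile (p := fun t => t < x) (l := s)] at ha
  rcases List.mem_append.1 ha with h | h
  · exact h
  · exact absurd (le_of_mem_dropWhile hs h) (by omega)

lemma sorted_push {x : ℕ} {s : List ℕ} (hs : s.Pairwise (· ≤ ·)) :
    (x :: s.dropWhile (fun t => t < x)).Pairwise (· ≤ ·) := by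
  refine List.pairwise_cons.2 ⟨fun y hy => le_of_mem_dropWhile hs hy, ?_⟩
  exact hs.sublist (List.dropWhile_sublist _)

lemma pair_sublist_of_mem_stack {a b : ℕ} (hab : a < b) :
    ∀ (xs s : List ℕ), s.Pairwise (· ≤ ·) → a ∈ s → b ∈ xs →
      [a, b].Sublist (stackRun s xs) := by
  intro xs
  induction xs with
  | nil => intro s _ _ hb; simp at hb
  | cons x xs ih =>
    intro s hs ha hb
    rw [stackRun_cons]
    rcases List.mem_cons.1 hb with rfl | hb
    · have haT : a ∈ s.takeWhile (fun t => t < b) := mem_takeWhile_of_lt hs ha hab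
      have hbR : b ∈ stackRun (b :: s.dropWhile (fun t => t < b)) xs :=
        (stack_sublist xs _).subset List.mem_cons_self
      exact List.Sublist.append (List.singleton_sublist.2 haT) (List.singleton_sublist.2 hbR)
    · by_cases haT : a ∈ s.takeWhile (fun t => t < x)
      · have hbR : b ∈ stackRun (x :: s.dropWhile (fun t => t < x)) xs :=
          ((stackRun_perm xs _).mem_iff).2 (by simp [hb])
        exact List.Sublist.append (List.singleton_sublist.2 haT) (List.singleton_sublist.2 hbR)
      · have haD : a ∈ s.dropWhile (fun t => t < x) := by
          rw [← List.takeWhile_append_dropWhile (p := fun t => t < x) (l := s)] at ha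
          rcases List.mem_append.1 ha with h | h
          · exact absurd h haT
          · exact h
        exact ((ih _ (sorted_push hs) (List.mem_cons_of_mem _ haD) hb)).trans
          (List.sublist_append_right _ _)

lemma pair_sublist_stackRun {a b : ℕ} (hab : a < b) :
    ∀ (u : List ℕ) (v s : List ℕ), s.Pairwise (· ≤ ·) → b ∈ v →
      [a, b].Sublist (stackRun s (u ++ a :: v)) := by
  intro u
  induction u with
  | nil =>
    intro v s hs hb
    rw [List.nil_append, stackRun_cons]
    exact (pair_sublist_of_mem_stack hab v _ (sorted_push hs)
      List.mem_cons_self hb).trans (List.sublist_append_right _ _)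
  | cons c u ih =>
    intro v s hs hb
    rw [List.cons_append, stackRun_cons]
    exact (ih v _ (sorted_push hs) hb).trans (List.sublist_append_right _ _)

lemma indexOf_lt_of_pair_sublist {l : List ℕ} {a b : ℕ} (h : [a, b].Sublist l)
    (hnd : l.Nodup) (hab : a ≠ b) : l.idxOf a < l.idxOf b := by
  induction l with
  | nil => simp at h
  | cons c l ih =>
    obtain ⟨hc, hnd⟩ := List.nodup_cons.1 hnd
    cases h with
    | cons _ h' =>
      have ha : a ∈ l := h'.subset (by simp)
      have hb : b ∈ l := h'.subset (by simp)
      rw [List.idxOf_cons_ne _ (by rintro rfl; exact hc ha),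
        List.idxOf_cons_ne _ (by rintro rfl; exact hc hb)]
      exact Nat.succ_lt_succ (ih h' hnd)
    | cons_cons _ h' =>
      rw [List.idxOf_cons_self, List.idxOf_cons_ne _ hab]
      exact Nat.succ_pos _

/-- stack-sort never reverses a non-inversion: if `i < j` and
`w i < w j`, then `w i` still precedes `w j` in `S w`. -/
theorem noninversion_preserved (w : List ℕ) (hw : w.Nodup)
    (i j : Fin w.length) (hij : i < j) (hval : w.get i < w.get j) :
    (S w).idxOf (w.get i) < (S w).idxOf (w.get j) := by
  have hij' : (i : ℕ) < (j : ℕ) := hij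
  have hsplit : w = w.take i ++ w.get i :: w.drop (i + 1) := by
    conv_lhs => rw [← List.take_append_drop i w]
    rw [List.drop_eq_getElem_cons i.isLt, List.get_eq_getElem]
  have hbmem : w.get j ∈ w.drop (i + 1) := by
    have h1 : (j : ℕ) - (i + 1) < (w.drop (i + 1)).length := by
      simp only [List.length_drop]; omega
    have h2 : (w.drop (i + 1))[(j : ℕ) - (i + 1)]'h1 = w[(j : ℕ)] := by
      rw [List.getElem_drop]; congr 1; omega
    rw [List.get_eq_getElem, ← h2]
    exact List.getElem_mem _
  have hsub := pair_sublist_stackRun hval (w.take i) (w.drop (i + 1)) []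
    List.Pairwise.nil hbmem
  rw [← hsplit] at hsub
  have hnd : (S w).Nodup := ((stackRun_perm w []).nodup_iff).2 (by simpa using hw)
  exact indexOf_lt_of_pair_sublist hsub hnd (Nat.ne_of_lt hval)
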